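/- For every positive integer n, ∑_{n < p ≤ 2n} log p ≤ 2n · log 2, where the sum is over primes p in (n, 2n]. -/

import Mathlib

theorem sum_log_primes_Ioc_le (n : ℕ) (hn : 0 < n) :
    ∑ p ∈ (Finset.Ioc n (2 * n)).filter Nat.Prime, Real.log p
      ≤ 2 * n * Real.log 2 := by
  set s := (Finset.Ioc n (2 * n)).filter Nat.Prime with hs
  have hdvd : ∏ p ∈ s, p ∣ Nat.choose (2 * n) n := by
    apply Finset.prod_primes_dvd
    · intro p hp
      simp only [hs, Finset.mem_filter, Finset.mem_Ioc] at hp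
      exact hp.2.prime
    · intro p hp
      simp only [hs, Finset.mem_filter, Finset.mem_Ioc] at hp
      refine Nat.Prime.dvd_choose hp.2 hp.1.1 ?_ hp.1.2
      omega
  have hle : (∏ p ∈ s, p) ≤ 2 ^ (2 * n) := by
    calc (∏ p ∈ s, p) ≤ Nat.choose (2 * n) n :=
          Nat.le_of_dvd (Nat.choose_pos (by omega)) hdvd
      _ ≤ 2 ^ (2 * n) := by
          have := Nat.sum_range_choose (2 * n)
          calc Nat.choose (2 * n) n ≤ ∑ i ∈ Finset.range (2 * n + 1), Nat.choose (2 * n) i :=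
                Finset.single_le_sum (fun i _ => Nat.zero_le _)
                  (Finset.mem_range.mpr (by omega))
            _ = 2 ^ (2 * n) := this
  have hpos : ∀ p ∈ s, (p : ℝ) ≠ 0 := by
    intro p hp
    simp only [hs, Finset.mem_filter] at hp
    exact_mod_cast hp.2.ne_zero
  have hlog : ∑ p ∈ s, Real.log p = Real.log (∏ p ∈ s, (p : ℝ)) :=
    (Real.log_prod hpos).symm
  rw [hlog]
  rw [← Nat.cast_prod]
  have : Real.log ((∏ p ∈ s, p : ℕ) : ℝ) ≤ Real.log ((2 : ℝ) ^ (2 * n)) := by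
    apply Real.log_le_log
    · have : 0 < ∏ p ∈ s, p := Finset.prod_pos (fun p hp => by
        simp only [hs, Finset.mem_filter] at hp
        exact hp.2.pos)
      exact_mod_cast this
    · exact_mod_cast hle
  refine this.trans_eq ?_
  rw [Real.log_pow]
  push_cast
  ring
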